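/- Let Ω/k be a field extension with Ω algebraically closed, X an affine algebraic variety over k, and Y a closed subvariety of X_Ω. If the set of Ω-points of Y that come from k-points of X is Zariski dense in Y, then Y is defined over k, i.e., the defining ideal of Y in Ω[X] = Ω ⊗_k k[X] is generated by its intersection with k[X]. -/

import Mathlib

open scoped TensorProduct

/-!
STATEMENT 12: Let Ω/k be a field extension with Ω algebraically closed, X an affine
algebraic variety over k (coordinate ring R, a reduced finitely generated k-algebra),
and Y a closed subvariety of X_Ω (defining ideal 𝔞 ⊆ Ω[X] = Ω ⊗_k R, a radical ideal).
If the Ω-points of Y coming from k-points of X are Zariski dense in Y (the only closed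
subscheme of Y containing all of them is Y itself), then Y is defined over k: 𝔞 is
generated by its intersection with k[X] = R (embedded via r ↦ 1 ⊗ r).
-/

noncomputable section

variable (k Ω : Type) [Field k] [Field Ω] [Algebra k Ω]
variable (R : Type) [CommRing R] [Algebra k R]

/-- Evaluation of `Ω ⊗[k] R` at a `k`-point `x : R →ₐ[k] k` of `X`, giving the induced
`Ω`-point of `X_Ω`. -/
def evalPt (x : R →ₐ[k] k) : Ω ⊗[k] R →ₐ[k] Ω :=
  (Algebra.TensorProduct.rid k k Ω).toAlgHom.comp
    (Algebra.TensorProduct.map (AlgHom.id k Ω) x)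

lemma evalPt_tmul (x : R →ₐ[k] k) (ω : Ω) (r : R) :
    evalPt k Ω R x (ω ⊗ₜ[k] r) = x r • ω := by
  simp [evalPt]

open scoped Classical in
-- the coordinate equivalence
def coordEquiv : Ω ⊗[k] R ≃ₗ[k] ((Module.Basis.ofVectorSpaceIndex k Ω) →₀ R) :=
  (LinearEquiv.rTensor R (Module.Basis.ofVectorSpace k Ω).repr).trans
    (TensorProduct.finsuppScalarLeft k R _)

lemma coordEquiv_tmul (ω : Ω) (r : R) (i : Module.Basis.ofVectorSpaceIndex k Ω) :
    coordEquiv k Ω R (ω ⊗ₜ[k] r) i = ((Module.Basis.ofVectorSpace k Ω).repr ω i) • r := by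
  simp [coordEquiv, LinearEquiv.rTensor]

lemma coordEquiv_symm_single (i : Module.Basis.ofVectorSpaceIndex k Ω) (r : R) :
    (coordEquiv k Ω R).symm (Finsupp.single i r) = (Module.Basis.ofVectorSpace k Ω) i ⊗ₜ[k] r := by
  simp [coordEquiv, LinearEquiv.rTensor]

lemma coordEquiv_sum (f : Ω ⊗[k] R) :
    (coordEquiv k Ω R f).sum (fun i r => (Module.Basis.ofVectorSpace k Ω) i ⊗ₜ[k] r) = f := by
  classical
  conv_rhs => rw [← (coordEquiv k Ω R).symm_apply_apply f]
  generalize coordEquiv k Ω R f = g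
  induction g using Finsupp.induction with
  | zero => simp
  | single_add i r g hig hr ih =>
      rw [Finsupp.sum_add_index (by simp) (by simp [TensorProduct.tmul_add]), map_add,
        coordEquiv_symm_single, ih, Finsupp.sum_single_index (by simp)]

lemma eval_coord (x : R →ₐ[k] k) (f : Ω ⊗[k] R) (i : Module.Basis.ofVectorSpaceIndex k Ω) :
    algebraMap k Ω (x (coordEquiv k Ω R f i)) =
      algebraMap k Ω ((Module.Basis.ofVectorSpace k Ω).repr (evalPt k Ω R x f) i) := by
  induction f using TensorProduct.induction_on with
  | zero => simp
  | tmul ω r =>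
      rw [coordEquiv_tmul, evalPt_tmul]
      simp [map_smul, smul_eq_mul, mul_comm]
  | add f g hf hg =>
      simp only [map_add, Finsupp.add_apply, map_add] at *
      rw [hf, hg]


theorem stmt12 [IsAlgClosed Ω]
    (hfg : Algebra.FiniteType k R) [IsReduced R]
    (𝔞 : Ideal (Ω ⊗[k] R)) (hrad : 𝔞.IsRadical)
    -- Zariski density of X(k) ∩ Y(Ω) in Y: any closed subscheme of Y containing all
    -- points of X(k) that lie on Y must be Y itself.
    (hdense : ∀ 𝔟 : Ideal (Ω ⊗[k] R), 𝔞 ≤ 𝔟 →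
      (∀ x : R →ₐ[k] k, (∀ f ∈ 𝔞, evalPt k Ω R x f = 0) →
        ∀ g ∈ 𝔟, evalPt k Ω R x g = 0) → 𝔟 = 𝔞) :
    𝔞 = Ideal.span {z : Ω ⊗[k] R | ∃ r : R, z = 1 ⊗ₜ[k] r ∧ (1 ⊗ₜ[k] r : Ω ⊗[k] R) ∈ 𝔞} := by
  classical
  set 𝔠 : Ideal (Ω ⊗[k] R) :=
    ⨅ x : {x : R →ₐ[k] k // ∀ f ∈ 𝔞, evalPt k Ω R x f = 0},
      RingHom.ker (evalPt k Ω R x.1) with h𝔠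
  have hmem : ∀ g : Ω ⊗[k] R, g ∈ 𝔠 ↔
      ∀ x : R →ₐ[k] k, (∀ f ∈ 𝔞, evalPt k Ω R x f = 0) → evalPt k Ω R x g = 0 := by
    intro g
    rw [h𝔠, Ideal.mem_iInf]
    constructor
    · intro h x hx; exact h ⟨x, hx⟩
    · intro h x; exact h x.1 x.2
  have hc : 𝔠 = 𝔞 := by
    refine hdense 𝔠 (fun f hf => ?_) (fun x hx g hg => ?_)
    · exact (hmem f).2 fun x hx => hx f hf
    · exact (hmem g).1 hg x hx
  apply le_antisymm
  · -- main inclusion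
    intro f hf
    have key : ∀ i, (1 ⊗ₜ[k] (coordEquiv k Ω R f i) : Ω ⊗[k] R) ∈ 𝔞 := by
      intro i
      rw [← hc, hmem]
      intro x hx
      rw [evalPt_tmul]
      have h0 : evalPt k Ω R x f = 0 := by rw [← hc, hmem] at hf; exact hf x hx
      have := eval_coord k Ω R x f i
      rw [h0, map_zero, Finsupp.coe_zero, Pi.zero_apply, map_zero] at this
      have hx0 : x (coordEquiv k Ω R f i) = 0 :=
        (algebraMap k Ω).injective (by rw [this, map_zero])
      rw [hx0, zero_smul]
    rw [← coordEquiv_sum k Ω R f]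
    refine Ideal.sum_mem _ fun i hi => ?_
    have h1 : ((Module.Basis.ofVectorSpace k Ω) i ⊗ₜ[k] (coordEquiv k Ω R f i) : Ω ⊗[k] R) =
        ((Module.Basis.ofVectorSpace k Ω) i ⊗ₜ[k] (1 : R)) * (1 ⊗ₜ[k] (coordEquiv k Ω R f i)) := by
      rw [Algebra.TensorProduct.tmul_mul_tmul, mul_one, one_mul]
    simp only []
    rw [h1]
    exact Ideal.mul_mem_left _ _ (Ideal.subset_span ⟨_, rfl, key i⟩)
  · rw [Ideal.span_le]
    rintro z ⟨r, rfl, hr⟩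
    exact hr


end
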